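/- Let H be a bialgebra and D an H-bimodule algebra (i.e., D is an algebra with compatible left and right H-actions satisfying h·1_D = ε(h)1_D, 1_D·h = ε(h)1_D, h·(cd) = (h₁·c)(h₂·d), and (cd)·h = (c·h₁)(d·h₂)). Then the vector space D ⊗ H with unit 1_D ⊗ 1_H and multiplication (d ⊗ h)(d' ⊗ h') = (d·h'₂)(h₁·d') ⊗ h₂h'₁ is an associative unital algebra (the L-R-smash product D ♮ H). -/

import Mathlib

open TensorProduct
noncomputable section
namespace LRPaper
variable (k : Type*) [CommRing k]

def tt (A B C E : Type*) [AddCommGroup A] [Module k A] [AddCommGroup B] [Module k B]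
    [AddCommGroup C] [Module k C] [AddCommGroup E] [Module k E] :
    (A ⊗[k] B) ⊗[k] (C ⊗[k] E) →ₗ[k] (A ⊗[k] C) ⊗[k] (B ⊗[k] E) :=
  (TensorProduct.tensorTensorTensorComm k A B C E).toLinearMap

def asl (A B C : Type*) [AddCommGroup A] [Module k A] [AddCommGroup B] [Module k B]
    [AddCommGroup C] [Module k C] :
    (A ⊗[k] B) ⊗[k] C →ₗ[k] A ⊗[k] (B ⊗[k] C) :=
  (TensorProduct.assoc k A B C).toLinearMap

def asr (A B C : Type*) [AddCommGroup A] [Module k A] [AddCommGroup B] [Module k B]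
    [AddCommGroup C] [Module k C] :
    A ⊗[k] (B ⊗[k] C) →ₗ[k] (A ⊗[k] B) ⊗[k] C :=
  (TensorProduct.assoc k A B C).symm.toLinearMap

def sw (A B : Type*) [AddCommGroup A] [Module k A] [AddCommGroup B] [Module k B] :
    A ⊗[k] B →ₗ[k] B ⊗[k] A :=
  (TensorProduct.comm k A B).toLinearMap


/-- `middle f` applies `f` to the two middle tensor factors. -/
def middle {A B C E B' C' : Type*} [AddCommGroup A] [Module k A] [AddCommGroup B] [Module k B]
    [AddCommGroup C] [Module k C] [AddCommGroup E] [Module k E]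
    [AddCommGroup B'] [Module k B'] [AddCommGroup C'] [Module k C']
    (f : B ⊗[k] C →ₗ[k] B' ⊗[k] C') :
    (A ⊗[k] B) ⊗[k] (C ⊗[k] E) →ₗ[k] (A ⊗[k] B') ⊗[k] (C' ⊗[k] E) :=
  asl k (A ⊗[k] B') C' E
    ∘ₗ TensorProduct.map
        (asr k A B' C' ∘ₗ TensorProduct.map LinearMap.id f ∘ₗ asl k A B C) LinearMap.id
    ∘ₗ asr k (A ⊗[k] B) C E

section Conditions
variable (H : Type*) [Ring H] [Bialgebra k H]
variable {M N : Type*} [AddCommGroup M] [Module k M] [AddCommGroup N] [Module k N]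

/-- counit of `H` -/
def εH : H →ₗ[k] k := Coalgebra.counit
/-- comultiplication of `H` -/
def δH : H →ₗ[k] H ⊗[k] H := Coalgebra.comul
/-- multiplication of `H` -/
def μH : H ⊗[k] H →ₗ[k] H := LinearMap.mul' k H

def IsLeftModule (aL : H ⊗[k] M →ₗ[k] M) : Prop :=
  (∀ m : M, aL (1 ⊗ₜ m) = m) ∧
  ∀ (h h' : H) (m : M), aL ((h * h') ⊗ₜ m) = aL (h ⊗ₜ aL (h' ⊗ₜ m))

def IsRightModule (aR : M ⊗[k] H →ₗ[k] M) : Prop :=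
  (∀ m : M, aR (m ⊗ₜ 1) = m) ∧
  ∀ (m : M) (h h' : H), aR (m ⊗ₜ (h * h')) = aR (aR (m ⊗ₜ h) ⊗ₜ h')

def IsBimodule (aL : H ⊗[k] M →ₗ[k] M) (aR : M ⊗[k] H →ₗ[k] M) : Prop :=
  IsLeftModule k H aL ∧ IsRightModule k H aR ∧
  ∀ (h : H) (m : M) (h' : H), aR (aL (h ⊗ₜ m) ⊗ₜ h') = aL (h ⊗ₜ aR (m ⊗ₜ h'))

def IsLeftComodule (cL : M →ₗ[k] H ⊗[k] M) : Prop :=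
  (∀ m : M, TensorProduct.lid k M (TensorProduct.map (εH k H) LinearMap.id (cL m)) = m) ∧
  ∀ m : M, TensorProduct.map LinearMap.id cL (cL m)
    = TensorProduct.assoc k H H M (TensorProduct.map (δH k H) LinearMap.id (cL m))

def IsRightComodule (cR : M →ₗ[k] M ⊗[k] H) : Prop :=
  (∀ m : M, TensorProduct.rid k M (TensorProduct.map LinearMap.id (εH k H) (cR m)) = m) ∧
  ∀ m : M, TensorProduct.map cR LinearMap.id (cR m)
    = (TensorProduct.assoc k M H H).symm (TensorProduct.map LinearMap.id (δH k H) (cR m))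

def IsBicomodule (cL : M →ₗ[k] H ⊗[k] M) (cR : M →ₗ[k] M ⊗[k] H) : Prop :=
  IsLeftComodule k H cL ∧ IsRightComodule k H cR ∧
  ∀ m : M, TensorProduct.map LinearMap.id cR (cL m)
    = TensorProduct.assoc k H M H (TensorProduct.map cL LinearMap.id (cR m))

/-- `(h₁⊗h₂)⊗m ↦ (h₁·m)⁽⁻¹⁾h₂ ⊗ (h₁·m)⁽⁰⁾` -/
def ydlL (aL : H ⊗[k] M →ₗ[k] M) (cL : M →ₗ[k] H ⊗[k] M) :
    (H ⊗[k] H) ⊗[k] M →ₗ[k] H ⊗[k] M :=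
  TensorProduct.map (μH k H ∘ₗ sw k H H) LinearMap.id
    ∘ₗ asr k H H M
    ∘ₗ TensorProduct.map LinearMap.id (cL ∘ₗ aL)
    ∘ₗ asl k H H M
    ∘ₗ TensorProduct.map (sw k H H) LinearMap.id

/-- `(h₁⊗h₂)⊗m ↦ h₁m⁽⁻¹⁾ ⊗ h₂·m⁽⁰⁾` -/
def ydlR (aL : H ⊗[k] M →ₗ[k] M) (cL : M →ₗ[k] H ⊗[k] M) :
    (H ⊗[k] H) ⊗[k] M →ₗ[k] H ⊗[k] M :=
  TensorProduct.map (μH k H) aL ∘ₗ tt k H H H M ∘ₗ TensorProduct.map LinearMap.id cL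

/-- left-left Yetter–Drinfeld compatibility -/
def CondYDl (aL : H ⊗[k] M →ₗ[k] M) (cL : M →ₗ[k] H ⊗[k] M) : Prop :=
  ∀ (h : H) (m : M),
    ydlL k H aL cL (δH k H h ⊗ₜ m) = ydlR k H aL cL (δH k H h ⊗ₜ m)

/-- left-right Long compatibility -/
def CondLongLR (aL : H ⊗[k] M →ₗ[k] M) (cR : M →ₗ[k] M ⊗[k] H) : Prop :=
  ∀ (h : H) (m : M),
    cR (aL (h ⊗ₜ m))
      = TensorProduct.map aL LinearMap.id ((TensorProduct.assoc k H M H).symm (h ⊗ₜ cR m))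

/-- `m⊗(h₁⊗h₂) ↦ (m·h₂)⁽⁰⁾ ⊗ h₁(m·h₂)⁽¹⁾` -/
def ydrL (aR : M ⊗[k] H →ₗ[k] M) (cR : M →ₗ[k] M ⊗[k] H) :
    M ⊗[k] (H ⊗[k] H) →ₗ[k] M ⊗[k] H :=
  TensorProduct.map LinearMap.id (μH k H ∘ₗ sw k H H)
    ∘ₗ asl k M H H
    ∘ₗ TensorProduct.map (cR ∘ₗ aR) LinearMap.id
    ∘ₗ asr k M H H
    ∘ₗ TensorProduct.map LinearMap.id (sw k H H)

/-- `m⊗(h₁⊗h₂) ↦ m⁽⁰⁾·h₁ ⊗ m⁽¹⁾h₂` -/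
def ydrR (aR : M ⊗[k] H →ₗ[k] M) (cR : M →ₗ[k] M ⊗[k] H) :
    M ⊗[k] (H ⊗[k] H) →ₗ[k] M ⊗[k] H :=
  TensorProduct.map aR (μH k H) ∘ₗ tt k M H H H ∘ₗ TensorProduct.map cR LinearMap.id

/-- right-right Yetter–Drinfeld compatibility -/
def CondYDr (aR : M ⊗[k] H →ₗ[k] M) (cR : M →ₗ[k] M ⊗[k] H) : Prop :=
  ∀ (h : H) (m : M),
    ydrL k H aR cR (m ⊗ₜ δH k H h) = ydrR k H aR cR (m ⊗ₜ δH k H h)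

/-- right-left Long compatibility -/
def CondLongRL (aR : M ⊗[k] H →ₗ[k] M) (cL : M →ₗ[k] H ⊗[k] M) : Prop :=
  ∀ (m : M) (h : H),
    cL (aR (m ⊗ₜ h))
      = TensorProduct.map LinearMap.id aR (TensorProduct.assoc k H M H (cL m ⊗ₜ h))

/-- objects of the category LR(H) -/
def IsLRObj (aL : H ⊗[k] M →ₗ[k] M) (aR : M ⊗[k] H →ₗ[k] M)
    (cL : M →ₗ[k] H ⊗[k] M) (cR : M →ₗ[k] M ⊗[k] H) : Prop :=
  IsBimodule k H aL aR ∧ IsBicomodule k H cL cR ∧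
  CondYDl k H aL cL ∧ CondLongLR k H aL cR ∧ CondYDr k H aR cR ∧ CondLongRL k H aR cL


variable {P : Type*} [AddCommGroup P] [Module k P]

/-- diagonal left action on `M ⊗ N` -/
def tActL (aLM : H ⊗[k] M →ₗ[k] M) (aLN : H ⊗[k] N →ₗ[k] N) :
    H ⊗[k] (M ⊗[k] N) →ₗ[k] M ⊗[k] N :=
  TensorProduct.map aLM aLN ∘ₗ tt k H H M N ∘ₗ TensorProduct.map (δH k H) LinearMap.id

/-- diagonal right action on `M ⊗ N` -/
def tActR (aRM : M ⊗[k] H →ₗ[k] M) (aRN : N ⊗[k] H →ₗ[k] N) :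
    (M ⊗[k] N) ⊗[k] H →ₗ[k] M ⊗[k] N :=
  TensorProduct.map aRM aRN ∘ₗ tt k M N H H ∘ₗ TensorProduct.map LinearMap.id (δH k H)

/-- codiagonal left coaction on `M ⊗ N` -/
def tCoactL (cLM : M →ₗ[k] H ⊗[k] M) (cLN : N →ₗ[k] H ⊗[k] N) :
    M ⊗[k] N →ₗ[k] H ⊗[k] (M ⊗[k] N) :=
  TensorProduct.map (μH k H) LinearMap.id ∘ₗ tt k H M H N ∘ₗ TensorProduct.map cLM cLN

/-- codiagonal right coaction on `M ⊗ N` -/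
def tCoactR (cRM : M →ₗ[k] M ⊗[k] H) (cRN : N →ₗ[k] N ⊗[k] H) :
    M ⊗[k] N →ₗ[k] (M ⊗[k] N) ⊗[k] H :=
  TensorProduct.map LinearMap.id (μH k H) ∘ₗ tt k M H N H ∘ₗ TensorProduct.map cRM cRN

/-- the (pre)braiding `m ⊗ n ↦ m⁽⁻¹⁾·n⁽⁰⁾ ⊗ m⁽⁰⁾·n⁽¹⁾` of LR(H) -/
def braid (cLM : M →ₗ[k] H ⊗[k] M) (aRM : M ⊗[k] H →ₗ[k] M)
    (aLN : H ⊗[k] N →ₗ[k] N) (cRN : N →ₗ[k] N ⊗[k] H) :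
    M ⊗[k] N →ₗ[k] N ⊗[k] M :=
  TensorProduct.map aLN aRM ∘ₗ tt k H M N H ∘ₗ TensorProduct.map cLM cRN

/-- coalgebra axioms for explicit comultiplication and counit -/
def IsCoalg (Δd : M →ₗ[k] M ⊗[k] M) (εd : M →ₗ[k] k) : Prop :=
  (∀ m : M, TensorProduct.lid k M (TensorProduct.map εd LinearMap.id (Δd m)) = m) ∧
  (∀ m : M, TensorProduct.rid k M (TensorProduct.map LinearMap.id εd (Δd m)) = m) ∧
  ∀ m : M, TensorProduct.assoc k M M M (TensorProduct.map Δd LinearMap.id (Δd m))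
    = TensorProduct.map LinearMap.id Δd (Δd m)

/-- `M` is a left `H`-comodule coalgebra -/
def IsLComodCoalg (cL : M →ₗ[k] H ⊗[k] M) (Δd : M →ₗ[k] M ⊗[k] M) (εd : M →ₗ[k] k) : Prop :=
  (∀ m : M,
    TensorProduct.map (μH k H) LinearMap.id (tt k H M H M (TensorProduct.map cL cL (Δd m)))
      = TensorProduct.map LinearMap.id Δd (cL m)) ∧
  ∀ m : M, TensorProduct.rid k H (TensorProduct.map LinearMap.id εd (cL m)) = εd m • (1 : H)

/-- `M` is a right `H`-comodule coalgebra -/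
def IsRComodCoalg (cR : M →ₗ[k] M ⊗[k] H) (Δd : M →ₗ[k] M ⊗[k] M) (εd : M →ₗ[k] k) : Prop :=
  (∀ m : M,
    TensorProduct.map LinearMap.id (μH k H) (tt k M H M H (TensorProduct.map cR cR (Δd m)))
      = TensorProduct.map Δd LinearMap.id (cR m)) ∧
  ∀ m : M, TensorProduct.lid k H (TensorProduct.map εd LinearMap.id (cR m)) = εd m • (1 : H)

/-- morphisms of LR(H) -/
def IsLRHom {M' : Type*} [AddCommGroup M'] [Module k M']
    (aLM : H ⊗[k] M →ₗ[k] M) (aRM : M ⊗[k] H →ₗ[k] M)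
    (cLM : M →ₗ[k] H ⊗[k] M) (cRM : M →ₗ[k] M ⊗[k] H)
    (aLM' : H ⊗[k] M' →ₗ[k] M') (aRM' : M' ⊗[k] H →ₗ[k] M')
    (cLM' : M' →ₗ[k] H ⊗[k] M') (cRM' : M' →ₗ[k] M' ⊗[k] H)
    (f : M →ₗ[k] M') : Prop :=
  (∀ (h : H) (m : M), f (aLM (h ⊗ₜ m)) = aLM' (h ⊗ₜ f m)) ∧
  (∀ (m : M) (h : H), f (aRM (m ⊗ₜ h)) = aRM' (f m ⊗ₜ h)) ∧
  (∀ m : M, cLM' (f m) = TensorProduct.map LinearMap.id f (cLM m)) ∧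
  (∀ m : M, cRM' (f m) = TensorProduct.map f LinearMap.id (cRM m))


end Conditions

section AlgebraConditions
variable (H : Type*) [Ring H] [Bialgebra k H]
variable {D : Type*} [Ring D] [Algebra k D]

/-- multiplication of `D` -/
def μD : D ⊗[k] D →ₗ[k] D := LinearMap.mul' k D

/-- `D` is a left `H`-module algebra -/
def IsLeftModuleAlgebra (aL : H ⊗[k] D →ₗ[k] D) : Prop :=
  (∀ h : H, aL (h ⊗ₜ (1 : D)) = εH k H h • (1 : D)) ∧
  ∀ (h : H) (c d : D),
    aL (h ⊗ₜ (c * d))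
      = μD k (TensorProduct.map aL aL (tt k H H D D (δH k H h ⊗ₜ (c ⊗ₜ d))))

/-- `D` is a right `H`-module algebra -/
def IsRightModuleAlgebra (aR : D ⊗[k] H →ₗ[k] D) : Prop :=
  (∀ h : H, aR ((1 : D) ⊗ₜ h) = εH k H h • (1 : D)) ∧
  ∀ (c d : D) (h : H),
    aR ((c * d) ⊗ₜ h)
      = μD k (TensorProduct.map aR aR (tt k D D H H ((c ⊗ₜ d) ⊗ₜ δH k H h)))

/-- `ε_D` is an algebra map -/
def CondCounitAlg (εd : D →ₗ[k] k) : Prop :=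
  εd 1 = 1 ∧ ∀ c d : D, εd (c * d) = εd c * εd d

/-- `ε_D(h·d) = ε(h)ε_D(d)` and `ε_D(d·h) = ε_D(d)ε(h)` -/
def CondCounitActs (aL : H ⊗[k] D →ₗ[k] D) (aR : D ⊗[k] H →ₗ[k] D) (εd : D →ₗ[k] k) : Prop :=
  ∀ (h : H) (d : D), εd (aL (h ⊗ₜ d)) = εH k H h * εd d ∧ εd (aR (d ⊗ₜ h)) = εd d * εH k H h

/-- unitality of the coactions and of the comultiplication of `D` -/
def CondUnits (cL : D →ₗ[k] H ⊗[k] D) (cR : D →ₗ[k] D ⊗[k] H) (Δd : D →ₗ[k] D ⊗[k] D) : Prop :=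
  cL 1 = 1 ⊗ₜ 1 ∧ cR 1 = 1 ⊗ₜ 1 ∧ Δd 1 = 1 ⊗ₜ 1

/-- both coactions of `D` are multiplicative -/
def CondCoactMul (cL : D →ₗ[k] H ⊗[k] D) (cR : D →ₗ[k] D ⊗[k] H) : Prop :=
  (∀ c d : D, cL (c * d)
      = TensorProduct.map (μH k H) (μD k) (tt k H D H D (cL c ⊗ₜ cL d))) ∧
  ∀ c d : D, cR (c * d)
      = TensorProduct.map (μD k) (μH k H) (tt k D H D H (cR c ⊗ₜ cR d))

/-- `Δ_D` is an `H`-bimodule map -/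
def CondComulAct (aL : H ⊗[k] D →ₗ[k] D) (aR : D ⊗[k] H →ₗ[k] D)
    (Δd : D →ₗ[k] D ⊗[k] D) : Prop :=
  (∀ (h : H) (d : D), Δd (aL (h ⊗ₜ d))
      = TensorProduct.map aL aL (tt k H H D D (δH k H h ⊗ₜ Δd d))) ∧
  ∀ (d : D) (h : H), Δd (aR (d ⊗ₜ h))
      = TensorProduct.map aR aR (tt k D D H H (Δd d ⊗ₜ δH k H h))

/-- `Δ_D(cd) = c₁(c₂⁽⁻¹⁾·d₁⁽⁰⁾) ⊗ (c₂⁽⁰⁾·d₁⁽¹⁾)d₂` -/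
def CondBraidMul (aL : H ⊗[k] D →ₗ[k] D) (aR : D ⊗[k] H →ₗ[k] D)
    (cL : D →ₗ[k] H ⊗[k] D) (cR : D →ₗ[k] D ⊗[k] H) (Δd : D →ₗ[k] D ⊗[k] D) : Prop :=
  ∀ c d : D, Δd (c * d)
    = TensorProduct.map (μD k) (μD k)
        (middle k (braid k H cL aR aL cR) (Δd c ⊗ₜ Δd d))

/-- `c⁽⁰⁾·d⁽⁻¹⁾ ⊗ c⁽¹⁾·d⁽⁰⁾ = c ⊗ d` -/
def Cond114 (aL : H ⊗[k] D →ₗ[k] D) (aR : D ⊗[k] H →ₗ[k] D)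
    (cL : D →ₗ[k] H ⊗[k] D) (cR : D →ₗ[k] D ⊗[k] H) : Prop :=
  ∀ c d : D, TensorProduct.map aR aL (tt k D H H D (cR c ⊗ₜ cL d)) = c ⊗ₜ d

/-- `(H, D)` is an L-R-admissible pair -/
def LRAdmissible (aL : H ⊗[k] D →ₗ[k] D) (aR : D ⊗[k] H →ₗ[k] D)
    (cL : D →ₗ[k] H ⊗[k] D) (cR : D →ₗ[k] D ⊗[k] H)
    (Δd : D →ₗ[k] D ⊗[k] D) (εd : D →ₗ[k] k) : Prop :=
  IsBimodule k H aL aR ∧ IsLeftModuleAlgebra k H aL ∧ IsRightModuleAlgebra k H aR ∧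
  IsBicomodule k H cL cR ∧ IsCoalg k Δd εd ∧
  IsLComodCoalg k H cL Δd εd ∧ IsRComodCoalg k H cR Δd εd ∧
  CondCounitAlg k εd ∧ CondCounitActs k H aL aR εd ∧ CondUnits k H cL cR Δd ∧
  CondCoactMul k H cL cR ∧ CondComulAct k H aL aR Δd ∧ CondBraidMul k H aL aR cL cR Δd ∧
  CondYDl k H aL cL ∧ CondLongLR k H aL cR ∧ CondYDr k H aR cR ∧ CondLongRL k H aR cL ∧
  Cond114 k H aL aR cL cR

/-- `Σ (d·h'₂) ⊗ h'₁` -/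
def Xel (aR : D ⊗[k] H →ₗ[k] D) (d : D) (h' : H) : D ⊗[k] H :=
  TensorProduct.map aR LinearMap.id
    ((TensorProduct.assoc k D H H).symm (d ⊗ₜ TensorProduct.comm k H H (δH k H h')))

/-- `Σ (h₁·d') ⊗ h₂` -/
def Yel (aL : H ⊗[k] D →ₗ[k] D) (h : H) (d' : D) : D ⊗[k] H :=
  TensorProduct.comm k H D
    (TensorProduct.map LinearMap.id aL
      (TensorProduct.assoc k H H D
        (TensorProduct.map (sw k H H) LinearMap.id (δH k H h ⊗ₜ d'))))

/-- the element `(d·h'₂)(h₁·d') ⊗ h₂h'₁` of the L-R-smash product -/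
def smashMulExpr (aL : H ⊗[k] D →ₗ[k] D) (aR : D ⊗[k] H →ₗ[k] D)
    (d : D) (h : H) (d' : D) (h' : H) : D ⊗[k] H :=
  TensorProduct.map (μD k) (μH k H ∘ₗ sw k H H)
    (tt k D H D H (Xel k H aR d h' ⊗ₜ Yel k H aL h d'))

end AlgebraConditions

section CoproductGeneric
variable (H : Type*) [Ring H] [Bialgebra k H]
variable {D : Type*} [AddCommGroup D] [Module k D]

/-- structure map of the L-R-smash coproduct:
`(d₁⊗d₂)⊗(h₁⊗h₂) ↦ (d₁⁽⁰⁾ ⊗ d₂⁽⁻¹⁾h₁) ⊗ (d₂⁽⁰⁾ ⊗ h₂d₁⁽¹⁾)` -/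
def Wmap (cL : D →ₗ[k] H ⊗[k] D) (cR : D →ₗ[k] D ⊗[k] H) :
    (D ⊗[k] D) ⊗[k] (H ⊗[k] H) →ₗ[k] (D ⊗[k] H) ⊗[k] (D ⊗[k] H) :=
  TensorProduct.map
      (TensorProduct.map LinearMap.id (μH k H) ∘ₗ asl k D H H)
      (TensorProduct.map LinearMap.id (μH k H ∘ₗ sw k H H) ∘ₗ asl k D H H
        ∘ₗ TensorProduct.map (sw k H D) LinearMap.id)
    ∘ₗ tt k (D ⊗[k] H) (H ⊗[k] D) H H
    ∘ₗ TensorProduct.map (tt k D H H D) LinearMap.id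
    ∘ₗ TensorProduct.map (TensorProduct.map cR cL) LinearMap.id

/-- counit of the L-R-smash coproduct -/
def smashCounit (εd : D →ₗ[k] k) : D ⊗[k] H →ₗ[k] k :=
  LinearMap.mul' k k ∘ₗ TensorProduct.map εd (εH k H)



end CoproductGeneric

/-- the trivial right action `d·h = ε(h)d` -/
def trivActR {D : Type*} [AddCommGroup D] [Module k D] (H : Type*) [Ring H] [Bialgebra k H] :
    D ⊗[k] H →ₗ[k] D :=
  (TensorProduct.rid k D).toLinearMap ∘ₗ TensorProduct.map LinearMap.id (εH k H)

/-- the trivial right coaction `d ↦ d ⊗ 1` -/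
def trivCoactR {D : Type*} [AddCommGroup D] [Module k D] (H : Type*) [Ring H] [Bialgebra k H] :
    D →ₗ[k] D ⊗[k] H :=
  TensorProduct.map LinearMap.id (Algebra.linearMap k H) ∘ₗ (TensorProduct.rid k D).symm.toLinearMap

/-- the trivial left action `h·d = ε(h)d` -/
def trivActL {D : Type*} [AddCommGroup D] [Module k D] (H : Type*) [Ring H] [Bialgebra k H] :
    H ⊗[k] D →ₗ[k] D :=
  (TensorProduct.lid k D).toLinearMap ∘ₗ TensorProduct.map (εH k H) LinearMap.id

/-- the trivial left coaction `d ↦ 1 ⊗ d` -/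
def trivCoactL {D : Type*} [AddCommGroup D] [Module k D] (H : Type*) [Ring H] [Bialgebra k H] :
    D →ₗ[k] H ⊗[k] D :=
  TensorProduct.map (Algebra.linearMap k H) LinearMap.id ∘ₗ (TensorProduct.lid k D).symm.toLinearMap

section DoubleBiproduct
variable (H : Type*) [Ring H] [Bialgebra k H]
variable (A B : Type*) [Ring A] [Algebra k A] [Ring B] [Algebra k B]

/-- braiding of the left-left Yetter-Drinfeld category: `x ⊗ y ↦ x⁽⁻¹⁾·y ⊗ x⁽⁰⁾` -/
def braidYDl (cA : A →ₗ[k] H ⊗[k] A) (aA : H ⊗[k] A →ₗ[k] A) :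
    A ⊗[k] A →ₗ[k] A ⊗[k] A :=
  sw k A A ∘ₗ TensorProduct.map LinearMap.id aA ∘ₗ asl k A H A
    ∘ₗ TensorProduct.map (sw k H A) LinearMap.id ∘ₗ TensorProduct.map cA LinearMap.id

/-- braiding of the right-right Yetter-Drinfeld category: `x ⊗ y ↦ y⁽⁰⁾ ⊗ x·y⁽¹⁾` -/
def braidYDr (cB : B →ₗ[k] B ⊗[k] H) (aB : B ⊗[k] H →ₗ[k] B) :
    B ⊗[k] B →ₗ[k] B ⊗[k] B :=
  TensorProduct.map LinearMap.id aB ∘ₗ asl k B B H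
    ∘ₗ TensorProduct.map (sw k B B) LinearMap.id ∘ₗ asr k B B H
    ∘ₗ TensorProduct.map LinearMap.id cB

/-- `A` is a bialgebra in the left-left Yetter-Drinfeld category over `H` -/
def YDlBialgebra (aA : H ⊗[k] A →ₗ[k] A) (cA : A →ₗ[k] H ⊗[k] A)
    (ΔA : A →ₗ[k] A ⊗[k] A) (εA : A →ₗ[k] k) : Prop :=
  IsLeftModule k H aA ∧ IsLeftComodule k H cA ∧ CondYDl k H aA cA ∧
  IsLeftModuleAlgebra k H aA ∧
  (∀ a a' : A, cA (a * a')
      = TensorProduct.map (μH k H) (μD k) (tt k H A H A (cA a ⊗ₜ cA a'))) ∧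
  cA 1 = 1 ⊗ₜ 1 ∧ IsCoalg k ΔA εA ∧ CondCounitAlg k εA ∧
  (∀ (h : H) (a : A), εA (aA (h ⊗ₜ a)) = εH k H h * εA a) ∧ ΔA 1 = 1 ⊗ₜ 1 ∧
  (∀ (h : H) (a : A), ΔA (aA (h ⊗ₜ a))
      = TensorProduct.map aA aA (tt k H H A A (δH k H h ⊗ₜ ΔA a))) ∧
  IsLComodCoalg k H cA ΔA εA ∧
  ∀ a a' : A, ΔA (a * a')
      = TensorProduct.map (μD k) (μD k)
          (middle k (braidYDl k H A cA aA) (ΔA a ⊗ₜ ΔA a'))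

/-- `B` is a bialgebra in the right-right Yetter-Drinfeld category over `H` -/
def YDrBialgebra (aB : B ⊗[k] H →ₗ[k] B) (cB : B →ₗ[k] B ⊗[k] H)
    (ΔB : B →ₗ[k] B ⊗[k] B) (εB : B →ₗ[k] k) : Prop :=
  IsRightModule k H aB ∧ IsRightComodule k H cB ∧ CondYDr k H aB cB ∧
  IsRightModuleAlgebra k H aB ∧
  (∀ b b' : B, cB (b * b')
      = TensorProduct.map (μD k) (μH k H) (tt k B H B H (cB b ⊗ₜ cB b'))) ∧
  cB 1 = 1 ⊗ₜ 1 ∧ IsCoalg k ΔB εB ∧ CondCounitAlg k εB ∧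
  (∀ (b : B) (h : H), εB (aB (b ⊗ₜ h)) = εB b * εH k H h) ∧ ΔB 1 = 1 ⊗ₜ 1 ∧
  (∀ (b : B) (h : H), ΔB (aB (b ⊗ₜ h))
      = TensorProduct.map aB aB (tt k B B H H (ΔB b ⊗ₜ δH k H h))) ∧
  IsRComodCoalg k H cB ΔB εB ∧
  ∀ b b' : B, ΔB (b * b')
      = TensorProduct.map (μD k) (μD k)
          (middle k (braidYDr k H B cB aB) (ΔB b ⊗ₜ ΔB b'))

/-- the trivial-pairing condition `b² ▷ a² ⊗ b¹ ◁ a¹ = a ⊗ b` -/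
def PairingTrivial (aA : H ⊗[k] A →ₗ[k] A) (cA : A →ₗ[k] H ⊗[k] A)
    (aB : B ⊗[k] H →ₗ[k] B) (cB : B →ₗ[k] B ⊗[k] H) : Prop :=
  ∀ (a : A) (b : B),
    sw k B A (TensorProduct.map aB aA (tt k B H H A (cB b ⊗ₜ cA a))) = a ⊗ₜ b

/-- `Σ a(h₁ ▷ a') ⊗ h₂` -/
def P1 (aA : H ⊗[k] A →ₗ[k] A) (a : A) (h : H) (a' : A) : A ⊗[k] H :=
  TensorProduct.map (μD k) LinearMap.id
    ((TensorProduct.assoc k A A H).symm (a ⊗ₜ Yel k H aA h a'))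

/-- `Σ h'₁ ⊗ (b ◁ h'₂)b'` -/
def P2 (aB : B ⊗[k] H →ₗ[k] B) (b : B) (h' : H) (b' : B) : H ⊗[k] B :=
  TensorProduct.map LinearMap.id (μD k)
    (TensorProduct.assoc k H B B
      ((sw k B H
          (TensorProduct.map aB LinearMap.id
            ((TensorProduct.assoc k B H H).symm
              (TensorProduct.map LinearMap.id (sw k H H) (b ⊗ₜ δH k H h'))))) ⊗ₜ b'))

/-- `(x⊗u)⊗(v⊗y) ↦ (x ⊗ uv) ⊗ y` -/
def combineAHB : (A ⊗[k] H) ⊗[k] (H ⊗[k] B) →ₗ[k] (A ⊗[k] H) ⊗[k] B :=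
  TensorProduct.map (TensorProduct.map LinearMap.id (μH k H)) LinearMap.id
    ∘ₗ TensorProduct.map (asl k A H H) LinearMap.id
    ∘ₗ (TensorProduct.assoc k (A ⊗[k] H) H B).symm.toLinearMap

/-- the element `a(h₁▷a') # h₂h'₁ # (b◁h'₂)b'` of the double biproduct -/
def dblMulExpr (aA : H ⊗[k] A →ₗ[k] A) (aB : B ⊗[k] H →ₗ[k] B)
    (a : A) (h : H) (b : B) (a' : A) (h' : H) (b' : B) : (A ⊗[k] H) ⊗[k] B :=
  combineAHB k H A B (P1 k H A aA a h a' ⊗ₜ P2 k H B aB b h' b')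

/-- comultiplication map of the double biproduct:
`((a₁⊗a₂)⊗(h₁⊗h₂))⊗(b₁⊗b₂) ↦ (a₁ # a₂¹h₁ # b₁¹) ⊗ (a₂² # h₂b₁² # b₂)` -/
def Wd (cA : A →ₗ[k] H ⊗[k] A) (cB : B →ₗ[k] B ⊗[k] H) :
    ((A ⊗[k] A) ⊗[k] (H ⊗[k] H)) ⊗[k] (B ⊗[k] B) →ₗ[k]
      ((A ⊗[k] H) ⊗[k] B) ⊗[k] ((A ⊗[k] H) ⊗[k] B) :=
  TensorProduct.map LinearMap.id
      (TensorProduct.map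
          (TensorProduct.map LinearMap.id (μH k H) ∘ₗ asl k A H H ∘ₗ sw k H (A ⊗[k] H))
          LinearMap.id
        ∘ₗ (TensorProduct.assoc k H (A ⊗[k] H) B).symm.toLinearMap)
    ∘ₗ (TensorProduct.assoc k ((A ⊗[k] H) ⊗[k] B) H ((A ⊗[k] H) ⊗[k] B)).toLinearMap
    ∘ₗ TensorProduct.map (TensorProduct.assoc k (A ⊗[k] H) B H).symm.toLinearMap LinearMap.id
    ∘ₗ tt k (A ⊗[k] H) (A ⊗[k] H) (B ⊗[k] H) B
    ∘ₗ TensorProduct.map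
        (TensorProduct.map (TensorProduct.map LinearMap.id (μH k H) ∘ₗ asl k A H H) LinearMap.id)
        LinearMap.id
    ∘ₗ TensorProduct.map (tt k (A ⊗[k] H) A H H) LinearMap.id
    ∘ₗ TensorProduct.map
        (TensorProduct.map
          ((TensorProduct.assoc k A H A).symm.toLinearMap ∘ₗ TensorProduct.map LinearMap.id cA)
          LinearMap.id)
        (TensorProduct.map cB LinearMap.id)

/-- counit of the double biproduct -/
def dblCounit (εA : A →ₗ[k] k) (εB : B →ₗ[k] k) : (A ⊗[k] H) ⊗[k] B →ₗ[k] k :=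
  LinearMap.mul' k k
    ∘ₗ TensorProduct.map (LinearMap.mul' k k ∘ₗ TensorProduct.map εA (εH k H)) εB

/-- induced left action on `D = A ⊗ B` -/
def dActL (aA : H ⊗[k] A →ₗ[k] A) : H ⊗[k] (A ⊗[k] B) →ₗ[k] A ⊗[k] B :=
  TensorProduct.map aA LinearMap.id ∘ₗ asr k H A B

/-- induced right action on `D = A ⊗ B` -/
def dActR (aB : B ⊗[k] H →ₗ[k] B) : (A ⊗[k] B) ⊗[k] H →ₗ[k] A ⊗[k] B :=
  TensorProduct.map LinearMap.id aB ∘ₗ asl k A B H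

/-- induced left coaction on `D = A ⊗ B` -/
def dCoactL (cA : A →ₗ[k] H ⊗[k] A) : A ⊗[k] B →ₗ[k] H ⊗[k] (A ⊗[k] B) :=
  asl k H A B ∘ₗ TensorProduct.map cA LinearMap.id

/-- induced right coaction on `D = A ⊗ B` -/
def dCoactR (cB : B →ₗ[k] B ⊗[k] H) : A ⊗[k] B →ₗ[k] (A ⊗[k] B) ⊗[k] H :=
  asr k A B H ∘ₗ TensorProduct.map LinearMap.id cB

/-- tensor product comultiplication on `D = A ⊗ B` -/
def dComul (ΔA : A →ₗ[k] A ⊗[k] A) (ΔB : B →ₗ[k] B ⊗[k] B) :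
    A ⊗[k] B →ₗ[k] (A ⊗[k] B) ⊗[k] (A ⊗[k] B) :=
  tt k A A B B ∘ₗ TensorProduct.map ΔA ΔB

/-- tensor product counit on `D = A ⊗ B` -/
def dCounit (εA : A →ₗ[k] k) (εB : B →ₗ[k] k) : A ⊗[k] B →ₗ[k] k :=
  LinearMap.mul' k k ∘ₗ TensorProduct.map εA εB

/-- `(a ⊗ b) ⊗ h ↦ (a ⊗ h) ⊗ b` -/
def phiAB : (A ⊗[k] B) ⊗[k] H →ₗ[k] (A ⊗[k] H) ⊗[k] B :=
  asr k A H B ∘ₗ TensorProduct.map LinearMap.id (sw k B H) ∘ₗ asl k A B H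

end DoubleBiproduct

section Pointwise
variable (H : Type*) [Ring H] [Bialgebra k H]
variable (M N : Type*) [AddCommGroup M] [Module k M] [AddCommGroup N] [Module k N]

/-- left action on `M ⊗ N` through the first factor -/
def pActL (aLM : H ⊗[k] M →ₗ[k] M) : H ⊗[k] (M ⊗[k] N) →ₗ[k] M ⊗[k] N :=
  TensorProduct.map aLM LinearMap.id ∘ₗ asr k H M N

/-- right action on `M ⊗ N` through the second factor -/
def pActR (aRN : N ⊗[k] H →ₗ[k] N) : (M ⊗[k] N) ⊗[k] H →ₗ[k] M ⊗[k] N :=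
  TensorProduct.map LinearMap.id aRN ∘ₗ asl k M N H

/-- left coaction on `M ⊗ N` through the first factor -/
def pCoactL (cLM : M →ₗ[k] H ⊗[k] M) : M ⊗[k] N →ₗ[k] H ⊗[k] (M ⊗[k] N) :=
  asl k H M N ∘ₗ TensorProduct.map cLM LinearMap.id

/-- right coaction on `M ⊗ N` through the second factor -/
def pCoactR (cRN : N →ₗ[k] N ⊗[k] H) : M ⊗[k] N →ₗ[k] (M ⊗[k] N) ⊗[k] H :=
  asr k M N H ∘ₗ TensorProduct.map LinearMap.id cRN

end Pointwise

section Identities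
variable (H : Type*) [Ring H] [Bialgebra k H]
variable (D : Type*) [Ring D] [Algebra k D]

/-- `c₂ ⊗ (h₁ ⊗ (d₁⁽⁰⁾ ⊗ d₁⁽¹⁾)) ↦ (c₂⁽⁻¹⁾h₁·d₁⁽⁰⁾) ⊗ (c₂⁽⁰⁾·d₁⁽¹⁾)` -/
def Fmap (aL : H ⊗[k] D →ₗ[k] D) (aR : D ⊗[k] H →ₗ[k] D) (cL : D →ₗ[k] H ⊗[k] D) :
    D ⊗[k] (H ⊗[k] (D ⊗[k] H)) →ₗ[k] D ⊗[k] D :=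
  TensorProduct.map aL LinearMap.id
    ∘ₗ asr k H D D
    ∘ₗ TensorProduct.map LinearMap.id
        (sw k D D ∘ₗ TensorProduct.map aR LinearMap.id ∘ₗ asr k D H D
          ∘ₗ TensorProduct.map LinearMap.id (sw k D H))
    ∘ₗ TensorProduct.map (μH k H) LinearMap.id
    ∘ₗ tt k H D H (D ⊗[k] H)
    ∘ₗ TensorProduct.map cL LinearMap.id

/-- `(h₁⊗h₂)⊗(c⊗d) ↦ [c(h₁·d)]₁ ⊗ ([c(h₁·d)]₂⁽⁻¹⁾h₂ ⊗ [c(h₁·d)]₂⁽⁰⁾)` -/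
def L3map (aL : H ⊗[k] D →ₗ[k] D) (cL : D →ₗ[k] H ⊗[k] D) (Δd : D →ₗ[k] D ⊗[k] D) :
    (H ⊗[k] H) ⊗[k] (D ⊗[k] D) →ₗ[k] D ⊗[k] (H ⊗[k] D) :=
  TensorProduct.map LinearMap.id (TensorProduct.map (μH k H) LinearMap.id)
    ∘ₗ TensorProduct.map LinearMap.id (asr k H H D)
    ∘ₗ asl k D H (H ⊗[k] D)
    ∘ₗ tt k D H H D
    ∘ₗ TensorProduct.map (sw k H D) LinearMap.id
    ∘ₗ asr k H D (H ⊗[k] D)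
    ∘ₗ TensorProduct.map LinearMap.id (TensorProduct.map LinearMap.id cL)
    ∘ₗ TensorProduct.map LinearMap.id Δd
    ∘ₗ TensorProduct.map LinearMap.id (μD k)
    ∘ₗ asl k H D D
    ∘ₗ TensorProduct.map LinearMap.id aL
    ∘ₗ tt k H H D D
    ∘ₗ TensorProduct.map (sw k H H) LinearMap.id

/-- `((h₁⊗h₂)⊗h₃)⊗((c₁⊗c₂)⊗(d₁⊗d₂)) ↦`
`c₁(c₂⁽⁻¹⁾h₁·d₁⁽⁰⁾) ⊗ (c₂⁽⁰⁾⁽⁻¹⁾h₂d₂⁽⁻¹⁾ ⊗ (c₂⁽⁰⁾⁽⁰⁾·d₁⁽¹⁾)(h₃·d₂⁽⁰⁾))` -/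
def R3map (aL : H ⊗[k] D →ₗ[k] D) (aR : D ⊗[k] H →ₗ[k] D)
    (cL : D →ₗ[k] H ⊗[k] D) (cR : D →ₗ[k] D ⊗[k] H) :
    ((H ⊗[k] H) ⊗[k] H) ⊗[k] ((D ⊗[k] D) ⊗[k] (D ⊗[k] D)) →ₗ[k]
      D ⊗[k] (H ⊗[k] D) :=
  TensorProduct.map (μD k) LinearMap.id
    ∘ₗ asr k D D (H ⊗[k] D)
    ∘ₗ TensorProduct.map LinearMap.id
        (asl k D H D
          ∘ₗ TensorProduct.map LinearMap.id (μD k)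
          ∘ₗ TensorProduct.map (TensorProduct.map aL (μH k H)) (TensorProduct.map aR aL)
          ∘ₗ TensorProduct.map (tt k H H D H) (tt k D H H D)
          ∘ₗ tt k (H ⊗[k] H) (D ⊗[k] H) (D ⊗[k] H) (H ⊗[k] D)
          ∘ₗ TensorProduct.map LinearMap.id (tt k D H H D))
    ∘ₗ asl k D ((H ⊗[k] H) ⊗[k] (D ⊗[k] H)) ((D ⊗[k] H) ⊗[k] (H ⊗[k] D))
    ∘ₗ TensorProduct.map
        (TensorProduct.map LinearMap.id
          (TensorProduct.map (TensorProduct.map (μH k H) (μH k H)) LinearMap.id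
            ∘ₗ TensorProduct.map (tt k H H H H) LinearMap.id
            ∘ₗ tt k (H ⊗[k] H) D (H ⊗[k] H) H))
        LinearMap.id
    ∘ₗ TensorProduct.map (asl k D ((H ⊗[k] H) ⊗[k] D) ((H ⊗[k] H) ⊗[k] H)) LinearMap.id
    ∘ₗ TensorProduct.map (sw k ((H ⊗[k] H) ⊗[k] H) (D ⊗[k] ((H ⊗[k] H) ⊗[k] D))) LinearMap.id
    ∘ₗ asr k ((H ⊗[k] H) ⊗[k] H) (D ⊗[k] ((H ⊗[k] H) ⊗[k] D))
        ((D ⊗[k] H) ⊗[k] (H ⊗[k] D))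
    ∘ₗ TensorProduct.map LinearMap.id
        (TensorProduct.map (TensorProduct.map LinearMap.id (asr k H H D)) LinearMap.id)
    ∘ₗ TensorProduct.map LinearMap.id
        (TensorProduct.map
          (TensorProduct.map LinearMap.id (TensorProduct.map LinearMap.id cL ∘ₗ cL))
          (TensorProduct.map cR cL))

end Identities

section Radford
variable (H : Type*) [Ring H] [Bialgebra k H]
variable (D : Type*) [Ring D] [Algebra k D]

/-- Radford's admissible-pair conditions for a left module algebra, left comodule
coalgebra `D` -/
def RadfordAdmissible (aL : H ⊗[k] D →ₗ[k] D) (cL : D →ₗ[k] H ⊗[k] D)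
    (Δd : D →ₗ[k] D ⊗[k] D) (εd : D →ₗ[k] k) : Prop :=
  IsLeftModule k H aL ∧ IsLeftModuleAlgebra k H aL ∧ IsLeftComodule k H cL ∧
  IsCoalg k Δd εd ∧ IsLComodCoalg k H cL Δd εd ∧ CondCounitAlg k εd ∧
  (∀ (h : H) (d : D), εd (aL (h ⊗ₜ d)) = εH k H h * εd d) ∧
  Δd 1 = 1 ⊗ₜ 1 ∧ cL 1 = 1 ⊗ₜ 1 ∧
  (∀ c d : D, cL (c * d)
      = TensorProduct.map (μH k H) (μD k) (tt k H D H D (cL c ⊗ₜ cL d))) ∧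
  (∀ (h : H) (d : D), Δd (aL (h ⊗ₜ d))
      = TensorProduct.map aL aL (tt k H H D D (δH k H h ⊗ₜ Δd d))) ∧
  (∀ c d : D, Δd (c * d)
      = TensorProduct.map (μD k) (μD k)
          (middle k (braidYDl k H D cL aL) (Δd c ⊗ₜ Δd d))) ∧
  CondYDl k H aL cL

/-- the element `d(h₁·d') ⊗ h₂h'` of the Radford biproduct -/
def radMulExpr (aL : H ⊗[k] D →ₗ[k] D) (d : D) (h : H) (d' : D) (h' : H) : D ⊗[k] H :=
  TensorProduct.map (μD k) (μH k H ∘ₗ sw k H H)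
    (tt k D H D H ((d ⊗ₜ h') ⊗ₜ Yel k H aL h d'))

/-- comultiplication map of the Radford biproduct:
`(d₁⊗d₂)⊗(h₁⊗h₂) ↦ (d₁ ⊗ d₂⁽⁻¹⁾h₁) ⊗ (d₂⁽⁰⁾ ⊗ h₂)` -/
def WRad (cL : D →ₗ[k] H ⊗[k] D) :
    (D ⊗[k] D) ⊗[k] (H ⊗[k] H) →ₗ[k] (D ⊗[k] H) ⊗[k] (D ⊗[k] H) :=
  TensorProduct.map (TensorProduct.map LinearMap.id (μH k H) ∘ₗ asl k D H H) LinearMap.id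
    ∘ₗ tt k (D ⊗[k] H) D H H
    ∘ₗ TensorProduct.map (asr k D H D) LinearMap.id
    ∘ₗ TensorProduct.map (TensorProduct.map LinearMap.id cL) LinearMap.id

/-- `(h₁·d) ⊗ h₂` reversed version: `(h₂·d) ⊗ h₁` -/
def Y2el (aL : H ⊗[k] D →ₗ[k] D) (h : H) (d : D) : D ⊗[k] H :=
  TensorProduct.comm k H D
    (TensorProduct.map LinearMap.id aL (TensorProduct.assoc k H H D (δH k H h ⊗ₜ d)))

/-- `(d·h₁) ⊗ h₂` -/
def X1el (aR : D ⊗[k] H →ₗ[k] D) (d : D) (h : H) : D ⊗[k] H :=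
  TensorProduct.map aR LinearMap.id ((TensorProduct.assoc k D H H).symm (d ⊗ₜ δH k H h))

end Radford
end LRPaper

namespace LRPaper

open Coalgebra

set_option maxHeartbeats 1000000
set_option synthInstance.maxHeartbeats 400000

section SmashHelpers

variable {k : Type*} [CommRing k] {H : Type*} [Ring H] [Bialgebra k H]
  {D : Type*} [Ring D] [Algebra k D]
  (aL : H ⊗[k] D →ₗ[k] D) (aR : D ⊗[k] H →ₗ[k] D)

lemma smashMulExpr_expand (d d' : D) (h h' : H) {ι κ : Type*}
    (s : Finset ι) (t : Finset κ) (p q : ι → H) (a b : κ → H)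
    (hs : ∑ i ∈ s, p i ⊗ₜ[k] q i = δH k H h)
    (ht : ∑ j ∈ t, a j ⊗ₜ[k] b j = δH k H h') :
    smashMulExpr k H aL aR d h d' h'
      = ∑ i ∈ s, ∑ j ∈ t, (aR (d ⊗ₜ b j) * aL (p i ⊗ₜ d')) ⊗ₜ[k] (q i * a j) := by
  rw [smashMulExpr, Xel, Yel, ← hs, ← ht]
  simp only [map_sum, sum_tmul, tmul_sum, TensorProduct.map_tmul, assoc_tmul, assoc_symm_tmul,
    comm_tmul, tensorTensorTensorComm_tmul, LinearMap.mul'_apply, sw, tt, μD, μH,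
    LinearMap.coe_comp, LinearEquiv.coe_coe, Function.comp_apply, LinearMap.id_coe, id_eq]


lemma left_unit (hbim : IsBimodule k H aL aR) (hla : IsLeftModuleAlgebra k H aL)
    (hra : IsRightModuleAlgebra k H aR) (d' : D) (h' : H) :
    smashMulExpr k H aL aR 1 1 d' h' = d' ⊗ₜ[k] h' := by
  classical
  obtain ⟨s, hs⟩ := TensorProduct.exists_finset (R := k) (δH k H h')
  rw [smashMulExpr_expand aL aR 1 d' 1 h' ({0} : Finset ℕ) s (fun _ => 1) (fun _ => 1)
    (fun x => x.1) (fun x => x.2) (by simp [δH, Algebra.TensorProduct.one_def]) hs.symm]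
  simp only [Finset.sum_singleton, one_mul]
  have h1 : ∀ x : H, aR ((1:D) ⊗ₜ[k] x) = εH k H x • (1:D) := hra.1
  have h2 : aL ((1:H) ⊗ₜ[k] d') = d' := hbim.1.1 d'
  have key : ∑ x ∈ s, (εH k H x.2) • x.1 = h' := by
    have := congrArg
      (fun z => TensorProduct.rid k H ((Coalgebra.counit (R := k) (A := H)).lTensor H z)) hs
    simpa [εH, δH, map_sum] using this.symm
  simp only [h1, h2, smul_mul_assoc, one_mul, TensorProduct.smul_tmul, ← TensorProduct.tmul_sum]
  rw [key]

lemma right_unit (hbim : IsBimodule k H aL aR) (hla : IsLeftModuleAlgebra k H aL)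
    (hra : IsRightModuleAlgebra k H aR) (d : D) (h : H) :
    smashMulExpr k H aL aR d h 1 1 = d ⊗ₜ[k] h := by
  classical
  obtain ⟨s, hs⟩ := TensorProduct.exists_finset (R := k) (δH k H h)
  rw [smashMulExpr_expand aL aR d 1 h 1 s ({0} : Finset ℕ)
    (fun x => x.1) (fun x => x.2) (fun _ => 1) (fun _ => 1) hs.symm
    (by simp [δH, Algebra.TensorProduct.one_def])]
  simp only [Finset.sum_singleton, mul_one]
  have h1 : ∀ x : H, aL (x ⊗ₜ[k] (1:D)) = εH k H x • (1:D) := hla.1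
  have h2 : aR (d ⊗ₜ[k] (1:H)) = d := hbim.2.1.1 d
  have key : ∑ x ∈ s, (εH k H x.1) • x.2 = h := by
    have := congrArg
      (fun z => TensorProduct.lid k H ((Coalgebra.counit (R := k) (A := H)).rTensor H z)) hs
    simpa [εH, δH, map_sum] using this.symm
  simp only [h1, h2, mul_smul_comm, mul_one, TensorProduct.smul_tmul, ← TensorProduct.tmul_sum]
  rw [key]



variable (k) in
/-- `(id ⊗ Δ)(Δ x)` -/
noncomputable def wA (x : H) : H ⊗[k] (H ⊗[k] H) :=
  (Coalgebra.comul (R := k) (A := H)).lTensor H (Coalgebra.comul x)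

variable (k) in
/-- `(Δ ⊗ id)(Δ x)`, associated -/
noncomputable def wB (x : H) : H ⊗[k] (H ⊗[k] H) :=
  TensorProduct.assoc k H H H ((Coalgebra.comul (R := k) (A := H)).rTensor H (Coalgebra.comul x))

lemma wB_eq_wA (x : H) : wB k x = wA k x := Coalgebra.coassoc_apply x

/-- the common normal form of the two associativity expressions -/
noncomputable def lam (d d' d'' : D) :
    (H ⊗[k] (H ⊗[k] H)) ⊗[k] ((H ⊗[k] (H ⊗[k] H)) ⊗[k] (H ⊗[k] (H ⊗[k] H))) →ₗ[k] D ⊗[k] H :=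
  TensorProduct.map (μD k ∘ₗ sw k D D) LinearMap.id
    ∘ₗ asr k D D H
    ∘ₗ TensorProduct.map LinearMap.id (sw k H D)
    ∘ₗ TensorProduct.map (μD k) LinearMap.id
    ∘ₗ TensorProduct.map
        (TensorProduct.map
          (aR ∘ₗ LinearMap.rTensor H (aL ∘ₗ (TensorProduct.mk k H D).flip d'))
          (aL ∘ₗ (TensorProduct.mk k H D).flip d'' ∘ₗ μH k H))
        (TensorProduct.map
          (μH k H ∘ₗ LinearMap.lTensor H (μH k H))
          (aR ∘ₗ TensorProduct.mk k D H d ∘ₗ μH k H))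
    ∘ₗ TensorProduct.map
        (tt k H H H H ∘ₗ TensorProduct.map LinearMap.id (sw k H H))
        (asr k H (H ⊗[k] H) (H ⊗[k] H))
    ∘ₗ tt k (H ⊗[k] H) H (H ⊗[k] H) ((H ⊗[k] H) ⊗[k] (H ⊗[k] H))
    ∘ₗ TensorProduct.map (asr k H H H)
        (TensorProduct.map LinearMap.id (tt k H H H H)
          ∘ₗ tt k H (H ⊗[k] H) H (H ⊗[k] H)
          ∘ₗ TensorProduct.map LinearMap.id (sw k (H ⊗[k] H) H ∘ₗ asr k H H H))

lemma lam_tmul (d d' d'' : D) (x₁ x₂ x₃ y₁ y₂ y₃ z₁ z₂ z₃ : H) :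
    lam aL aR d d' d''
        ((x₁ ⊗ₜ (x₂ ⊗ₜ x₃)) ⊗ₜ ((y₁ ⊗ₜ (y₂ ⊗ₜ y₃)) ⊗ₜ (z₁ ⊗ₜ (z₂ ⊗ₜ z₃))))
      = (aR (d ⊗ₜ (y₃ * z₂)) *
          (aR (aL (x₁ ⊗ₜ d') ⊗ₜ z₃) * aL ((x₂ * y₁) ⊗ₜ d''))) ⊗ₜ[k] (x₃ * (y₂ * z₁)) := by
  simp [lam, tt, sw, asr, μD, μH, mul_assoc]


lemma wA_repr (x : H) (r : Coalgebra.Repr k x (H × H)) (rr : ∀ i : H × H, Coalgebra.Repr k (r.right i) (H × H)) :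
    wA k x = ∑ i ∈ r.index, ∑ n ∈ (rr i).index,
      r.left i ⊗ₜ[k] ((rr i).left n ⊗ₜ[k] (rr i).right n) := by
  rw [wA, ← r.eq, map_sum]
  refine Finset.sum_congr rfl fun i _ => ?_
  rw [LinearMap.lTensor_tmul, ← (rr i).eq, tmul_sum]

lemma wB_repr (x : H) (r : Coalgebra.Repr k x (H × H)) (rl : ∀ i : H × H, Coalgebra.Repr k (r.left i) (H × H)) :
    wB k x = ∑ i ∈ r.index, ∑ n ∈ (rl i).index,
      (rl i).left n ⊗ₜ[k] ((rl i).right n ⊗ₜ[k] r.right i) := by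
  rw [wB, ← r.eq, map_sum, map_sum]
  refine Finset.sum_congr rfl fun i _ => ?_
  rw [LinearMap.rTensor_tmul, ← (rl i).eq, sum_tmul, map_sum]
  simp [assoc_tmul]

lemma aR_mul_expand (hra : IsRightModuleAlgebra k H aR) (c e : D) (w : H) {κ : Type*}
    (t : Finset κ) (u v : κ → H) (ht : ∑ n ∈ t, u n ⊗ₜ[k] v n = δH k H w) :
    aR ((c * e) ⊗ₜ w) = ∑ n ∈ t, aR (c ⊗ₜ u n) * aR (e ⊗ₜ v n) := by
  rw [hra.2 c e w, ← ht]
  simp [tt, μD, tmul_sum, sum_tmul]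

lemma aL_mul_expand (hla : IsLeftModuleAlgebra k H aL) (c e : D) (w : H) {κ : Type*}
    (t : Finset κ) (u v : κ → H) (ht : ∑ n ∈ t, u n ⊗ₜ[k] v n = δH k H w) :
    aL (w ⊗ₜ (c * e)) = ∑ n ∈ t, aL (u n ⊗ₜ c) * aL (v n ⊗ₜ e) := by
  rw [hla.2 w c e, ← ht]
  simp [tt, μD, tmul_sum, sum_tmul]


lemma keyL (hbim : IsBimodule k H aL aR) (hra : IsRightModuleAlgebra k H aR)
    (μs : (D ⊗[k] H) ⊗[k] (D ⊗[k] H) →ₗ[k] D ⊗[k] H)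
    (hμ : ∀ (d : D) (h : H) (d' : D) (h' : H),
      μs ((d ⊗ₜ h) ⊗ₜ (d' ⊗ₜ h')) = smashMulExpr k H aL aR d h d' h')
    (d d' d'' : D) (h h' h'' : H) :
    μs (μs ((d ⊗ₜ h) ⊗ₜ (d' ⊗ₜ h')) ⊗ₜ (d'' ⊗ₜ h''))
      = lam aL aR d d' d'' (wA k h ⊗ₜ (wB k h' ⊗ₜ wA k h'')) := by
  classical
  set r := ℛ k h with hr
  set r' := ℛ k h' with hr'
  set r'' := ℛ k h'' with hr''
  let rq : ∀ i : H × H, Coalgebra.Repr k (r.right i) (H × H) := fun i => ℛ k (r.right i)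
  let ra : ∀ j : H × H, Coalgebra.Repr k (r'.left j) (H × H) := fun j => ℛ k (r'.left j)
  let rv : ∀ m : H × H, Coalgebra.Repr k (r''.right m) (H × H) := fun m => ℛ k (r''.right m)
  have L1 : μs (μs ((d ⊗ₜ h) ⊗ₜ (d' ⊗ₜ h')) ⊗ₜ (d'' ⊗ₜ h''))
      = ∑ i ∈ r.index, ∑ j ∈ r'.index, ∑ n2 ∈ (rq i).index, ∑ l ∈ (ra j).index,
        ∑ m ∈ r''.index, ∑ n ∈ (rv m).index,
        (aR (d ⊗ₜ (r'.right j * (rv m).left n)) *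
          (aR (aL (r.left i ⊗ₜ d') ⊗ₜ (rv m).right n) *
            aL (((rq i).left n2 * (ra j).left l) ⊗ₜ d''))) ⊗ₜ[k]
          ((rq i).right n2 * ((ra j).right l * r''.left m)) := by
    rw [hμ d h d' h',
      smashMulExpr_expand aL aR d d' h h' r.index r'.index r.left r.right r'.left r'.right
        r.eq r'.eq]
    simp only [sum_tmul, map_sum, hμ]
    refine Finset.sum_congr rfl fun i _ => Finset.sum_congr rfl fun j _ => ?_
    rw [smashMulExpr_expand aL aR _ d'' _ h'' ((rq i).index ×ˢ (ra j).index) r''.index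
      (fun kl => (rq i).left kl.1 * (ra j).left kl.2)
      (fun kl => (rq i).right kl.1 * (ra j).right kl.2)
      r''.left r''.right ?_ r''.eq]
    · rw [Finset.sum_product]
      refine Finset.sum_congr rfl fun n2 _ => Finset.sum_congr rfl fun l _ => ?_
      refine Finset.sum_congr rfl fun m _ => ?_
      rw [aR_mul_expand aR hra (aR (d ⊗ₜ r'.right j)) (aL (r.left i ⊗ₜ d')) (r''.right m)
        (rv m).index (rv m).left (rv m).right (rv m).eq]
      rw [Finset.sum_mul, sum_tmul]
      simp only [← hbim.2.1.2, mul_assoc]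
    · show _ = Coalgebra.comul _
      rw [Bialgebra.comul_mul, ← (rq i).eq, ← (ra j).eq, Finset.sum_mul_sum,
        Finset.sum_product]
      simp only [Algebra.TensorProduct.tmul_mul_tmul]
  have R1 : lam aL aR d d' d'' (wA k h ⊗ₜ (wB k h' ⊗ₜ wA k h''))
      = ∑ i ∈ r.index, ∑ n2 ∈ (rq i).index, ∑ j ∈ r'.index, ∑ l ∈ (ra j).index,
        ∑ m ∈ r''.index, ∑ n ∈ (rv m).index,
        (aR (d ⊗ₜ (r'.right j * (rv m).left n)) *
          (aR (aL (r.left i ⊗ₜ d') ⊗ₜ (rv m).right n) *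
            aL (((rq i).left n2 * (ra j).left l) ⊗ₜ d''))) ⊗ₜ[k]
          ((rq i).right n2 * ((ra j).right l * r''.left m)) := by
    rw [wA_repr h r rq]
    simp only [sum_tmul, map_sum]
    rw [wB_repr h' r' ra]
    simp only [sum_tmul, tmul_sum, map_sum]
    rw [wA_repr h'' r'' rv]
    simp only [sum_tmul, tmul_sum, map_sum, lam_tmul]
  rw [L1, R1]
  exact Finset.sum_congr rfl fun i _ => Finset.sum_comm


lemma keyR (hbim : IsBimodule k H aL aR) (hla : IsLeftModuleAlgebra k H aL)
    (μs : (D ⊗[k] H) ⊗[k] (D ⊗[k] H) →ₗ[k] D ⊗[k] H)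
    (hμ : ∀ (d : D) (h : H) (d' : D) (h' : H),
      μs ((d ⊗ₜ h) ⊗ₜ (d' ⊗ₜ h')) = smashMulExpr k H aL aR d h d' h')
    (d d' d'' : D) (h h' h'' : H) :
    μs ((d ⊗ₜ h) ⊗ₜ μs ((d' ⊗ₜ h') ⊗ₜ (d'' ⊗ₜ h'')))
      = lam aL aR d d' d'' (wB k h ⊗ₜ (wA k h' ⊗ₜ wB k h'')) := by
  classical
  set r := ℛ k h with hr
  set r' := ℛ k h' with hr'
  set r'' := ℛ k h'' with hr''
  let rp : ∀ i : H × H, Coalgebra.Repr k (r.left i) (H × H) := fun i => ℛ k (r.left i)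
  let rb : ∀ j : H × H, Coalgebra.Repr k (r'.right j) (H × H) := fun j => ℛ k (r'.right j)
  let ru : ∀ m : H × H, Coalgebra.Repr k (r''.left m) (H × H) := fun m => ℛ k (r''.left m)
  have L1 : μs ((d ⊗ₜ h) ⊗ₜ μs ((d' ⊗ₜ h') ⊗ₜ (d'' ⊗ₜ h'')))
      = ∑ j ∈ r'.index, ∑ m ∈ r''.index, ∑ i ∈ r.index, ∑ s2 ∈ (rb j).index,
        ∑ t ∈ (ru m).index, ∑ w ∈ (rp i).index,
        (aR (d ⊗ₜ ((rb j).right s2 * (ru m).right t)) *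
          (aR (aL ((rp i).left w ⊗ₜ d') ⊗ₜ r''.right m) *
            aL (((rp i).right w * r'.left j) ⊗ₜ d''))) ⊗ₜ[k]
          (r.right i * ((rb j).left s2 * (ru m).left t)) := by
    rw [hμ d' h' d'' h'',
      smashMulExpr_expand aL aR d' d'' h' h'' r'.index r''.index r'.left r'.right r''.left
        r''.right r'.eq r''.eq]
    simp only [tmul_sum, map_sum, hμ]
    refine Finset.sum_congr rfl fun j _ => Finset.sum_congr rfl fun m _ => ?_
    rw [smashMulExpr_expand aL aR d _ h _ r.index ((rb j).index ×ˢ (ru m).index)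
      r.left r.right
      (fun kl => (rb j).left kl.1 * (ru m).left kl.2)
      (fun kl => (rb j).right kl.1 * (ru m).right kl.2)
      r.eq ?_]
    · simp only [Finset.sum_product]
      refine Finset.sum_congr rfl fun i _ => Finset.sum_congr rfl fun s2 _ =>
        Finset.sum_congr rfl fun t _ => ?_
      rw [aL_mul_expand aL hla (aR (d' ⊗ₜ r''.right m)) (aL (r'.left j ⊗ₜ d'')) (r.left i)
        (rp i).index (rp i).left (rp i).right (rp i).eq]
      rw [Finset.mul_sum, sum_tmul]
      simp only [← hbim.2.2, ← hbim.1.2]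
    · show _ = Coalgebra.comul _
      rw [Bialgebra.comul_mul, ← (rb j).eq, ← (ru m).eq, Finset.sum_mul_sum,
        Finset.sum_product]
      simp only [Algebra.TensorProduct.tmul_mul_tmul]
  have R1 : lam aL aR d d' d'' (wB k h ⊗ₜ (wA k h' ⊗ₜ wB k h''))
      = ∑ j ∈ r'.index, ∑ s2 ∈ (rb j).index, ∑ m ∈ r''.index, ∑ t ∈ (ru m).index,
        ∑ i ∈ r.index, ∑ w ∈ (rp i).index,
        (aR (d ⊗ₜ ((rb j).right s2 * (ru m).right t)) *
          (aR (aL ((rp i).left w ⊗ₜ d') ⊗ₜ r''.right m) *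
            aL (((rp i).right w * r'.left j) ⊗ₜ d''))) ⊗ₜ[k]
          (r.right i * ((rb j).left s2 * (ru m).left t)) := by
    rw [wA_repr h' r' rb]
    simp only [sum_tmul, tmul_sum, map_sum]
    rw [wB_repr h'' r'' ru]
    simp only [sum_tmul, tmul_sum, map_sum]
    rw [wB_repr h r rp]
    simp only [sum_tmul, tmul_sum, map_sum, lam_tmul]
  rw [L1, R1]
  refine Finset.sum_congr rfl fun j _ => ?_
  calc ∑ m ∈ r''.index, ∑ i ∈ r.index, ∑ s2 ∈ (rb j).index, ∑ t ∈ (ru m).index,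
        ∑ w ∈ (rp i).index, _
      = ∑ m ∈ r''.index, ∑ s2 ∈ (rb j).index, ∑ i ∈ r.index, ∑ t ∈ (ru m).index,
        ∑ w ∈ (rp i).index, _ := Finset.sum_congr rfl fun m _ => Finset.sum_comm
    _ = ∑ s2 ∈ (rb j).index, ∑ m ∈ r''.index, ∑ i ∈ r.index, ∑ t ∈ (ru m).index,
        ∑ w ∈ (rp i).index, _ := Finset.sum_comm
    _ = ∑ s2 ∈ (rb j).index, ∑ m ∈ r''.index, ∑ t ∈ (ru m).index, ∑ i ∈ r.index,
        ∑ w ∈ (rp i).index, _ := Finset.sum_congr rfl fun s2 _ =>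
          Finset.sum_congr rfl fun m _ => Finset.sum_comm



end SmashHelpers

/-- the L-R-smash product `D ♮ H` is an associative unital algebra. -/
theorem lr_smash_product_is_algebra
    {k : Type*} [CommRing k] {H : Type*} [Ring H] [Bialgebra k H]
    {D : Type*} [Ring D] [Algebra k D]
    (aL : H ⊗[k] D →ₗ[k] D) (aR : D ⊗[k] H →ₗ[k] D)
    (hbim : IsBimodule k H aL aR)
    (hla : IsLeftModuleAlgebra k H aL) (hra : IsRightModuleAlgebra k H aR)
    (μs : (D ⊗[k] H) ⊗[k] (D ⊗[k] H) →ₗ[k] D ⊗[k] H)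
    (hμ : ∀ (d : D) (h : H) (d' : D) (h' : H),
      μs ((d ⊗ₜ h) ⊗ₜ (d' ⊗ₜ h')) = smashMulExpr k H aL aR d h d' h') :
    (∀ x y z : D ⊗[k] H, μs (μs (x ⊗ₜ y) ⊗ₜ z) = μs (x ⊗ₜ μs (y ⊗ₜ z))) ∧
    (∀ x : D ⊗[k] H, μs (((1 : D) ⊗ₜ (1 : H)) ⊗ₜ x) = x) ∧
    (∀ x : D ⊗[k] H, μs (x ⊗ₜ ((1 : D) ⊗ₜ (1 : H))) = x) := by
  refine ⟨fun x y z => ?_, fun x => ?_, fun x => ?_⟩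
  · induction x using TensorProduct.induction_on with
    | zero => simp
    | add a b ha hb => simp [add_tmul, map_add, ha, hb]
    | tmul d hh =>
      induction y using TensorProduct.induction_on with
      | zero => simp
      | add a b ha hb => simp [add_tmul, tmul_add, map_add, ha, hb]
      | tmul d' h' =>
        induction z using TensorProduct.induction_on with
        | zero => simp
        | add a b ha hb => simp [tmul_add, map_add, ha, hb]
        | tmul d'' h'' =>
          rw [keyL aL aR hbim hra μs hμ d d' d'' hh h' h'',
              keyR aL aR hbim hla μs hμ d d' d'' hh h' h'']
          simp only [wB_eq_wA]
  · induction x using TensorProduct.induction_on with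
    | zero => simp
    | add a b ha hb => simp [tmul_add, map_add, ha, hb]
    | tmul d' h' => rw [hμ, left_unit aL aR hbim hla hra]
  · induction x using TensorProduct.induction_on with
    | zero => simp
    | add a b ha hb => simp [add_tmul, map_add, ha, hb]
    | tmul d hh => rw [hμ, right_unit aL aR hbim hla hra]

end LRPaper
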